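/- arXiv:1404.0239 — 2 statements merged into one kernel-verified Lean document; each statement's English description precedes it below -/
import Mathlib

section
/- Let a₁, a₂ : [0,T] → ℝ be continuous driving functions, let g_{1,t}(z), g_{2,t}(z) be the solutions of the chordal Loewner equations ∂_t g_{i,t}(z) = 2/(g_{i,t}(z) − a_i(t)) with g_{i,0}(z) = z, and suppose there is c > 0 such that |g_{i,t}(z) − a_i(t)| ≥ c for all t ∈ [0,T] and i = 1, 2. Then |g_{1,t}(z) − g_{2,t}(z)| ≤ (e^{2t/c²} − 1) · sup_{s∈[0,t]} |a₁(s) − a₂(s)| for all t ∈ [0,T]. -/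
open Complex Real

theorem loewner_lipschitz_in_driver (T : ℝ) (hT : 0 ≤ T)
    (a₁ a₂ : ℝ → ℝ)
    (ha₁ : ContinuousOn a₁ (Set.Icc 0 T)) (ha₂ : ContinuousOn a₂ (Set.Icc 0 T))
    (z : ℂ) (g₁ g₂ : ℝ → ℂ) (c : ℝ) (hc : 0 < c)
    (hg₁0 : g₁ 0 = z) (hg₂0 : g₂ 0 = z)
    (hd₁ : ∀ t ∈ Set.Icc (0 : ℝ) T, HasDerivAt g₁ (2 / (g₁ t - a₁ t)) t)
    (hd₂ : ∀ t ∈ Set.Icc (0 : ℝ) T, HasDerivAt g₂ (2 / (g₂ t - a₂ t)) t)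
    (hsep₁ : ∀ t ∈ Set.Icc (0 : ℝ) T, c ≤ ‖g₁ t - a₁ t‖)
    (hsep₂ : ∀ t ∈ Set.Icc (0 : ℝ) T, c ≤ ‖g₂ t - a₂ t‖) :
    ∀ t ∈ Set.Icc (0 : ℝ) T,
      ‖g₁ t - g₂ t‖
        ≤ (Real.exp (2 * t / c ^ 2) - 1)
            * sSup ((fun s => |a₁ s - a₂ s|) '' Set.Icc 0 t) := by
  intro t₀ ht₀
  obtain ⟨ht₀0, ht₀T⟩ := ht₀
  set M := sSup ((fun s => |a₁ s - a₂ s|) '' Set.Icc 0 t₀) with hM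
  have hsub : Set.Icc (0:ℝ) t₀ ⊆ Set.Icc 0 T := Set.Icc_subset_Icc le_rfl ht₀T
  have hbdd : BddAbove ((fun s => |a₁ s - a₂ s|) '' Set.Icc 0 t₀) :=
    IsCompact.bddAbove_image isCompact_Icc
      (((ha₁.mono hsub).sub (ha₂.mono hsub))).abs
  have hMle : ∀ s ∈ Set.Icc (0:ℝ) t₀, |a₁ s - a₂ s| ≤ M :=
    fun s hs => le_csSup hbdd ⟨s, hs, rfl⟩
  have hM0 : 0 ≤ M := le_trans (abs_nonneg _) (hMle 0 ⟨le_rfl, ht₀0⟩)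
  have hc2 : (0:ℝ) < c ^ 2 := by positivity
  set K := 2 / c ^ 2 with hKdef
  have hK : 0 < K := by positivity
  set f : ℝ → ℂ := fun t => g₁ t - g₂ t with hf
  set F : ℝ → ℂ := fun t => 2 / (g₁ t - a₁ t) - 2 / (g₂ t - a₂ t) with hF
  have hcont : ContinuousOn f (Set.Icc 0 t₀) := fun s hs =>
    (((hd₁ s (hsub hs)).sub (hd₂ s (hsub hs))).continuousAt).continuousWithinAt
  have hderiv : ∀ s ∈ Set.Ico (0:ℝ) t₀, HasDerivWithinAt f (F s) (Set.Ici s) s :=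
    fun s hs => ((hd₁ s (hsub ⟨hs.1, hs.2.le⟩)).sub
      (hd₂ s (hsub ⟨hs.1, hs.2.le⟩))).hasDerivWithinAt
  have hbound : ∀ s ∈ Set.Ico (0:ℝ) t₀, ‖F s‖ ≤ K * ‖f s‖ + K * M := by
    intro s hs
    have hsI : s ∈ Set.Icc 0 T := hsub ⟨hs.1, hs.2.le⟩
    set x := g₁ s - (a₁ s : ℂ) with hx'
    set y := g₂ s - (a₂ s : ℂ) with hy'
    have hx : c ≤ ‖x‖ := hsep₁ s hsI
    have hy : c ≤ ‖y‖ := hsep₂ s hsI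
    have hx0 : x ≠ 0 := by
      intro h; rw [h] at hx; simp at hx; linarith
    have hy0 : y ≠ 0 := by
      intro h; rw [h] at hy; simp at hy; linarith
    have key : F s = 2 * (y - x) / (x * y) := by
      rw [hF]; show 2 / x - 2 / y = _; rw [div_sub_div _ _ hx0 hy0]; ring
    have hyx : ‖y - x‖ ≤ ‖f s‖ + M := by
      have : y - x = -(f s) + ((a₁ s : ℂ) - (a₂ s : ℂ)) := by
        simp only [hf, hx', hy']; ring
      rw [this]
      refine le_trans (norm_add_le _ _) ?_
      have h1 : ‖-(f s)‖ = ‖f s‖ := by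
        rw [norm_neg]
      have h2 : ‖(a₁ s : ℂ) - (a₂ s : ℂ)‖ = |a₁ s - a₂ s| := by
        rw [← Complex.ofReal_sub, Complex.norm_real, Real.norm_eq_abs]
      rw [h1, h2]
      exact add_le_add_right (hMle s ⟨hs.1, hs.2.le⟩) _
    have hnorm : ‖F s‖ = 2 * ‖y - x‖ / (‖x‖ * ‖y‖) := by
      rw [key, norm_div, norm_mul, norm_mul, Complex.norm_two]
    rw [hnorm]
    have hxy : c ^ 2 ≤ ‖x‖ * ‖y‖ := by
      have := mul_le_mul hx hy hc.le (norm_nonneg x)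
      nlinarith
    have hxy0 : 0 < ‖x‖ * ‖y‖ := lt_of_lt_of_le hc2 hxy
    calc 2 * ‖y - x‖ / (‖x‖ * ‖y‖)
        ≤ 2 * (‖f s‖ + M) / c ^ 2 := by
          gcongr
          all_goals first
            | exact hyx
            | exact add_nonneg (norm_nonneg _) hM0
            | positivity
      _ = K * ‖f s‖ + K * M := by rw [hKdef]; field_simp
  have hG := norm_le_gronwallBound_of_norm_deriv_right_le (δ := 0) hcont hderiv
    (by simp [hf, hg₁0, hg₂0]) hbound t₀ ⟨ht₀0, le_rfl⟩
  rw [gronwallBound_of_K_ne_0 hK.ne'] at hG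
  have harg : K * (t₀ - 0) = 2 * t₀ / c ^ 2 := by rw [hKdef]; ring
  simp only [harg] at hG
  have heq : ‖g₁ t₀ - g₂ t₀‖ = ‖f t₀‖ := rfl
  rw [heq]
  calc ‖f t₀‖
      ≤ 0 * Real.exp (2 * t₀ / c ^ 2) + K * M / K * (Real.exp (2 * t₀ / c ^ 2) - 1) := hG
    _ = (Real.exp (2 * t₀ / c ^ 2) - 1) * M := by
        rw [mul_div_cancel_left₀ M hK.ne']; ring
end

section
/- Let b ∈ ℝ and let h : ℍ → ℝ be a bounded harmonic function on the open upper half-plane that extends continuously to ℝ \ {b} with h(x) = 1 for x > b and h(x) = 0 for x < b. Then h(z) = 1 − (1/π)·arg(z − b) for all z ∈ ℍ, where arg takes values in (0, π) on ℍ. -/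
open Complex Real

/-- The Laplacian of a function `f : ℂ → ℝ`, computed as the sum of the second
partial derivatives in the directions `1` and `I`. -/
noncomputable def laplacian (f : ℂ → ℝ) (z : ℂ) : ℝ :=
  fderiv ℝ (fun w => fderiv ℝ f w 1) z 1 + fderiv ℝ (fun w => fderiv ℝ f w Complex.I) z Complex.I

/-- A function is harmonic on a set if it is twice continuously differentiable there
and its Laplacian vanishes there. -/
def IsHarmonicOn (f : ℂ → ℝ) (s : Set ℂ) : Prop :=
  ContDiffOn ℝ 2 f s ∧ ∀ z ∈ s, laplacian f z = 0

open Set intervalIntegral Interval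

def UHP : Set ℂ := {z : ℂ | 0 < z.im}


/-- A real-linear map from `ℂ` is determined by its values at `1` and `I`. -/
lemma clm_ext_complex {E : Type*} [NormedAddCommGroup E] [NormedSpace ℝ E]
    {A B : ℂ →L[ℝ] E} (h1 : A 1 = B 1) (hI : A Complex.I = B Complex.I) : A = B := by
  ext z
  have hz : z = z.re • (1 : ℂ) + z.im • Complex.I := by
    apply Complex.ext <;> simp
  have key : ∀ (C : ℂ →L[ℝ] E), C z = z.re • C 1 + z.im • C Complex.I := by
    intro C
    conv_lhs => rw [hz]
    simp only [map_add, map_smul]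
  rw [key A, key B, h1, hI]

section CR
variable {h : ℂ → ℝ}

noncomputable def pderiv (h : ℂ → ℝ) (z : ℂ) : ℂ :=
  ((fderiv ℝ h z 1 : ℝ) : ℂ) - ((fderiv ℝ h z Complex.I : ℝ) : ℂ) * Complex.I


lemma pderiv_differentiableAt {z : ℂ} {s : Set ℂ} (hs : IsOpen s) (hz : z ∈ s)
    (hcd : ContDiffOn ℝ 2 h s) (hlap : ∀ w ∈ s, laplacian h w = 0) :
    DifferentiableAt ℂ (pderiv h) z := by
  -- the derivative map is differentiable
  have hA : DifferentiableOn ℝ (fderiv ℝ h) s :=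
    ((hcd.fderiv_of_isOpen (m := 1) hs (by norm_num)).differentiableOn (by norm_num))
  have hA' : DifferentiableAt ℝ (fderiv ℝ h) z :=
    (hA z hz).differentiableAt (hs.mem_nhds hz)
  set f'' := fderiv ℝ (fderiv ℝ h) z with hf''
  have h2 : HasFDerivAt (fderiv ℝ h) f'' z := hA'.hasFDerivAt
  -- symmetry
  have hsymm : ∀ v w : ℂ, f'' v w = f'' w v := by
    intro v w
    refine second_derivative_symmetric_of_eventually_of_real (f := h) ?_ h2 v w
    filter_upwards [hs.mem_nhds hz] with y hy
    exact (((hcd.differentiableOn (by norm_num)) y hy).differentiableAt (hs.mem_nhds hy)).hasFDerivAt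
  -- laplacian
  have hlap' : f'' 1 1 + f'' Complex.I Complex.I = 0 := by
    have e1 : HasFDerivAt (fun w => fderiv ℝ h w 1)
        ((ContinuousLinearMap.apply ℝ ℝ (1:ℂ)).comp f'') z :=
      (ContinuousLinearMap.apply ℝ ℝ (1:ℂ)).hasFDerivAt.comp z h2
    have e2 : HasFDerivAt (fun w => fderiv ℝ h w Complex.I)
        ((ContinuousLinearMap.apply ℝ ℝ (Complex.I)).comp f'') z :=
      (ContinuousLinearMap.apply ℝ ℝ (Complex.I)).hasFDerivAt.comp z h2
    have := hlap z hz
    rw [laplacian, e1.fderiv, e2.fderiv] at this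
    simpa using this
  -- derivative of pderiv
  have hp1 : HasFDerivAt (fun w => ((fderiv ℝ h w 1 : ℝ) : ℂ))
      (Complex.ofRealCLM.comp ((ContinuousLinearMap.apply ℝ ℝ (1:ℂ)).comp f'')) z :=
    Complex.ofRealCLM.hasFDerivAt.comp z
      ((ContinuousLinearMap.apply ℝ ℝ (1:ℂ)).hasFDerivAt.comp z h2)
  have hp2 : HasFDerivAt (fun w => ((fderiv ℝ h w Complex.I : ℝ) : ℂ) * Complex.I)
      ((Complex.ofRealCLM.comp ((ContinuousLinearMap.apply ℝ ℝ (Complex.I)).comp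
        f'')).smulRight Complex.I) z := by
    exact (Complex.ofRealCLM.hasFDerivAt.comp z
      ((ContinuousLinearMap.apply ℝ ℝ (Complex.I)).hasFDerivAt.comp z h2)).mul_const' Complex.I
  have hp : HasFDerivAt (pderiv h)
      ((Complex.ofRealCLM.comp ((ContinuousLinearMap.apply ℝ ℝ (1:ℂ)).comp f'')) -
       ((Complex.ofRealCLM.comp ((ContinuousLinearMap.apply ℝ ℝ (Complex.I)).comp
        f'')).smulRight Complex.I)) z := hp1.sub hp2
  set d : ℂ := ((f'' 1 1 : ℝ) : ℂ) - ((f'' 1 Complex.I : ℝ) : ℂ) * Complex.I with hd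
  have key : (d • ContinuousLinearMap.id ℂ ℂ).restrictScalars ℝ =
      ((Complex.ofRealCLM.comp ((ContinuousLinearMap.apply ℝ ℝ (1:ℂ)).comp f'')) -
       ((Complex.ofRealCLM.comp ((ContinuousLinearMap.apply ℝ ℝ (Complex.I)).comp
        f'')).smulRight Complex.I)) := by
    apply clm_ext_complex
    · simp [d]
    · simp [d]
      have hII : f'' Complex.I Complex.I = -(f'' 1 1) := by linarith [hlap']
      rw [hII, hsymm Complex.I 1]
      push_cast
      ring_nf
      rw [Complex.I_sq]
      ring
  exact ⟨_, hasFDerivAt_of_restrictScalars ℝ hp key⟩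

end CR



lemma rect_subset_H {a₁ a₂ t₁ t₂ : ℝ} (h₁ : 0 < t₁) (h₂ : 0 < t₂) :
    [[a₁, a₂]] ×ℂ [[t₁, t₂]] ⊆ UHP := by
  intro z hz
  rw [mem_reProdIm] at hz
  have h2 := hz.2
  rw [Set.uIcc, Set.mem_Icc] at h2
  have : (0:ℝ) < t₁ ⊓ t₂ := lt_min h₁ h₂
  exact lt_of_lt_of_le this h2.1

lemma horiz_integrable {p : ℂ → ℂ} (hp : ContinuousOn p UHP) {t : ℝ} (ht : 0 < t) (a₁ a₂ : ℝ) :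
    IntervalIntegrable (fun x : ℝ => p (x + t * Complex.I)) MeasureTheory.volume a₁ a₂ := by
  apply ContinuousOn.intervalIntegrable
  apply hp.comp (Continuous.continuousOn (by continuity))
  intro x _
  simp [UHP, ht]

lemma vert_integrable {p : ℂ → ℂ} (hp : ContinuousOn p UHP) {t₁ t₂ : ℝ} (h₁ : 0 < t₁) (h₂ : 0 < t₂)
    (a : ℝ) :
    IntervalIntegrable (fun y : ℝ => p (a + y * Complex.I)) MeasureTheory.volume t₁ t₂ := by
  apply ContinuousOn.intervalIntegrable
  apply hp.comp (Continuous.continuousOn (by continuity))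
  intro y hy
  simp only [UHP, Set.mem_setOf_eq, add_im, ofReal_im, mul_im, I_im, ofReal_re, I_re, mul_zero,
    zero_mul, sub_zero, zero_add, one_mul, mul_one]
  rw [Set.uIcc, Set.mem_Icc] at hy
  have : (0:ℝ) < t₁ ⊓ t₂ := lt_min h₁ h₂
  have := lt_of_lt_of_le this hy.1
  linarith

noncomputable def primFn (p : ℂ → ℂ) (w : ℂ) : ℂ :=
  (∫ x : ℝ in (0:ℝ)..w.re, p (x + Complex.I)) +
    Complex.I • ∫ y : ℝ in (1:ℝ)..w.im, p (w.re + y * Complex.I)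

lemma primFn_sub {p : ℂ → ℂ} (hd : DifferentiableOn ℂ p UHP) {c w : ℂ}
    (hc : c ∈ UHP) (hw : w ∈ UHP) :
    primFn p w - primFn p c = (∫ x : ℝ in c.re..w.re, p (x + w.im * Complex.I)) +
      Complex.I • ∫ y : ℝ in c.im..w.im, p (c.re + y * Complex.I) := by
  have hp := hd.continuousOn
  have hcim : (0:ℝ) < c.im := hc
  have hwim : (0:ℝ) < w.im := hw
  -- rectangle identity with corners c.re + I and w.re + w.im I
  have hrect := Complex.integral_boundary_rect_eq_zero_of_differentiableOn p
    (c.re + Complex.I) (w.re + w.im * Complex.I)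
    (hd.mono (by
      have : [[(c.re + Complex.I).re, (w.re + w.im*Complex.I).re]] ×ℂ
          [[(c.re + Complex.I).im, (w.re + w.im*Complex.I).im]] ⊆ UHP := by
        apply rect_subset_H <;> simp [hwim]
      exact this))
  simp only [add_re, ofReal_re, I_re, add_zero, mul_re, I_im, ofReal_im, mul_zero,
    add_im, I_im, mul_im, zero_add, one_mul, zero_mul, sub_zero, mul_one] at hrect
  -- hrect : ∫ x in c.re..w.re, p (x + 1*I) - ∫ x in c.re..w.re, p (x + w.im*I)
  --   + I • ∫ y in 1..w.im, p (w.re + y I) - I • ∫ y in 1..w.im, p (c.re + y I) = 0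
  have split1 : (∫ x : ℝ in (0:ℝ)..w.re, p (x + Complex.I)) =
      (∫ x : ℝ in (0:ℝ)..c.re, p (x + Complex.I)) +
      ∫ x : ℝ in c.re..w.re, p (x + Complex.I) := by
    rw [integral_add_adjacent_intervals]
    · have := horiz_integrable hp one_pos 0 c.re
      simpa using this
    · have := horiz_integrable hp one_pos c.re w.re
      simpa using this
  have split2 : (∫ y : ℝ in (1:ℝ)..w.im, p (c.re + y * Complex.I)) =
      (∫ y : ℝ in (1:ℝ)..c.im, p (c.re + y * Complex.I)) +
      ∫ y : ℝ in c.im..w.im, p (c.re + y * Complex.I) := by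
    rw [integral_add_adjacent_intervals]
    · exact vert_integrable hp one_pos hcim c.re
    · exact vert_integrable hp hcim hwim c.re
  simp only [primFn]
  have him : ((1:ℝ):ℂ) = Complex.I → False := by intro hh; simpa using congrArg Complex.im hh
  -- rewrite p (x + 1 * I) to p (x + I) in hrect if needed
  rw [split1]
  rw [show ((1:ℝ):ℂ) = ((1:ℝ):ℂ) from rfl] at hrect
  have e1 : (∫ x : ℝ in c.re..w.re, p (↑x + Complex.I)) =
      ∫ x : ℝ in c.re..w.re, p (↑x + ↑(1:ℝ) * Complex.I) := by norm_num
  rw [split2] at hrect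
  rw [e1]
  simp only [smul_eq_mul] at hrect ⊢
  linear_combination hrect


lemma isOpen_UHP : IsOpen UHP := by
  have : UHP = Complex.im ⁻¹' (Set.Ioi 0) := rfl
  rw [this]; exact isOpen_Ioi.preimage Complex.continuous_im

lemma primFn_hasDerivAt {p : ℂ → ℂ} (hd : DifferentiableOn ℂ p UHP) {c : ℂ} (hc : c ∈ UHP) :
    HasDerivAt (primFn p) (p c) c := by
  have hp := hd.continuousOn
  have hcim : (0:ℝ) < c.im := hc
  rw [hasDerivAt_iff_isLittleO, Asymptotics.isLittleO_iff]
  intro ε hε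
  have hcont : ContinuousAt p c := (hp c hc).continuousAt (isOpen_UHP.mem_nhds hc)
  obtain ⟨δ₀, hδ₀, hδ⟩ := Metric.continuousAt_iff.1 hcont (ε/3) (by linarith)
  set r : ℝ := min (δ₀/4) (c.im/2) with hr
  have hrpos : 0 < r := lt_min (by linarith) (by linarith)
  filter_upwards [Metric.ball_mem_nhds c hrpos] with w hwball
  have hdist : dist w c < r := hwball
  have habs : norm (w - c) < r := by rwa [← Complex.dist_eq]
  have him : |w.im - c.im| ≤ norm (w - c) := by
    simpa using Complex.abs_im_le_norm (w - c)
  have hre : |w.re - c.re| ≤ norm (w - c) := by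
    simpa using Complex.abs_re_le_norm (w - c)
  have hwim : (0:ℝ) < w.im := by
    have : |w.im - c.im| < c.im/2 := lt_of_le_of_lt him (lt_of_lt_of_le habs (min_le_right _ _))
    have := abs_lt.1 this
    linarith
  have hw : w ∈ UHP := hwim
  -- integrabilities
  have ih : IntervalIntegrable (fun x : ℝ => p (x + w.im * Complex.I))
      MeasureTheory.volume c.re w.re := horiz_integrable hp hwim _ _
  have iv : IntervalIntegrable (fun y : ℝ => p (c.re + y * Complex.I))
      MeasureTheory.volume c.im w.im := vert_integrable hp hcim hwim _
  have key : primFn p w - primFn p c - (w - c) • p c =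
      (∫ x : ℝ in c.re..w.re, (p (x + w.im * Complex.I) - p c)) +
      Complex.I • ∫ y : ℝ in c.im..w.im, (p (c.re + y * Complex.I) - p c) := by
    rw [primFn_sub hd hc hw]
    rw [intervalIntegral.integral_sub ih intervalIntegrable_const,
        intervalIntegral.integral_sub iv intervalIntegrable_const,
        intervalIntegral.integral_const, intervalIntegral.integral_const]
    have hwc : (w - c) = ((w.re - c.re : ℝ) : ℂ) + ((w.im - c.im : ℝ) : ℂ) * Complex.I := by
      apply Complex.ext <;> simp
    simp only [smul_eq_mul, Complex.real_smul]
    rw [hwc]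
    push_cast
    ring
  rw [key]
  have hb1 : ‖∫ x : ℝ in c.re..w.re, (p (x + w.im * Complex.I) - p c)‖ ≤
      (ε/3) * |w.re - c.re| := by
    apply intervalIntegral.norm_integral_le_of_norm_le_const
    intro x hx
    have hx' : |x - c.re| ≤ |w.re - c.re| := by
      rw [Set.mem_uIoc] at hx
      cases hx with
      | inl h => rw [_root_.abs_of_nonneg (by linarith [h.1]), _root_.abs_of_nonneg (by linarith [h.1, h.2])]; linarith [h.2]
      | inr h => rw [_root_.abs_of_nonpos (by linarith [h.2]), _root_.abs_of_nonpos (by linarith [h.1, h.2])]; linarith [h.1]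
    have hdd : dist (↑x + ↑w.im * Complex.I) c < δ₀ := by
      rw [Complex.dist_eq]
      have : norm ((↑x + ↑w.im * Complex.I) - c) ≤ |x - c.re| + |w.im - c.im| := by
        have : ((↑x + ↑w.im * Complex.I) - c) =
            (((x - c.re : ℝ)) : ℂ) + ((w.im - c.im : ℝ) : ℂ) * Complex.I := by
          apply Complex.ext <;> simp
        rw [this]
        calc norm _ ≤ norm ((x - c.re : ℝ) : ℂ) +
              norm (((w.im - c.im : ℝ) : ℂ) * Complex.I) := norm_add_le _ _
        _ = |x - c.re| + |w.im - c.im| := by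
              simp [norm_mul, ← Complex.ofReal_sub, Complex.norm_real]
      calc norm ((↑x + ↑w.im * Complex.I) - c) ≤ |x - c.re| + |w.im - c.im| := this
      _ ≤ |w.re - c.re| + |w.im - c.im| := by linarith
      _ ≤ 2 * norm (w - c) := by linarith
      _ < 2 * r := by linarith
      _ ≤ δ₀ := by
          have := min_le_left (δ₀/4) (c.im/2)
          rw [hr] at *
          linarith [this]
    have := hδ hdd
    rw [Complex.dist_eq] at this
    calc ‖p (↑x + ↑w.im * Complex.I) - p c‖ = norm (p (↑x + ↑w.im * Complex.I) - p c) := rfl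
    _ ≤ ε/3 := le_of_lt this
  have hb2 : ‖∫ y : ℝ in c.im..w.im, (p (c.re + y * Complex.I) - p c)‖ ≤
      (ε/3) * |w.im - c.im| := by
    apply intervalIntegral.norm_integral_le_of_norm_le_const
    intro y hy
    have hy' : |y - c.im| ≤ |w.im - c.im| := by
      rw [Set.mem_uIoc] at hy
      cases hy with
      | inl h => rw [_root_.abs_of_nonneg (by linarith [h.1]), _root_.abs_of_nonneg (by linarith [h.1, h.2])]; linarith [h.2]
      | inr h => rw [_root_.abs_of_nonpos (by linarith [h.2]), _root_.abs_of_nonpos (by linarith [h.1, h.2])]; linarith [h.1]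
    have hdd : dist (↑c.re + ↑y * Complex.I) c < δ₀ := by
      rw [Complex.dist_eq]
      have heq : ((↑c.re + ↑y * Complex.I) - c) = ((y - c.im : ℝ) : ℂ) * Complex.I := by
        apply Complex.ext <;> simp
      rw [heq]
      calc norm (((y - c.im : ℝ) : ℂ) * Complex.I) = |y - c.im| := by
              simp [norm_mul, ← Complex.ofReal_sub, Complex.norm_real]
      _ ≤ |w.im - c.im| := hy'
      _ ≤ norm (w - c) := him
      _ < r := habs
      _ ≤ δ₀ := le_trans (min_le_left _ _) (by linarith)
    have := hδ hdd
    rw [Complex.dist_eq] at this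
    exact le_of_lt this
  calc ‖(∫ x : ℝ in c.re..w.re, (p (x + w.im * Complex.I) - p c)) +
      Complex.I • ∫ y : ℝ in c.im..w.im, (p (c.re + y * Complex.I) - p c)‖
      ≤ ‖∫ x : ℝ in c.re..w.re, (p (x + w.im * Complex.I) - p c)‖ +
        ‖Complex.I • ∫ y : ℝ in c.im..w.im, (p (c.re + y * Complex.I) - p c)‖ := norm_add_le _ _
  _ ≤ (ε/3) * |w.re - c.re| + (ε/3) * |w.im - c.im| := by
      rw [norm_smul]
      simp only [Complex.norm_I, one_mul]
      exact add_le_add hb1 hb2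
  _ ≤ (ε/3) * ‖w - c‖ + (ε/3) * ‖w - c‖ := by
      have h3 : (0:ℝ) ≤ ε/3 := by linarith
      exact add_le_add (mul_le_mul_of_nonneg_left hre h3) (mul_le_mul_of_nonneg_left him h3)
  _ ≤ ε * ‖w - c‖ := by
      have : (0:ℝ) ≤ ‖w - c‖ := norm_nonneg _
      nlinarith


section absLemmas
variable {b : ℝ} {z : ℂ}

lemma one_le_abs_zbi (hz : 0 ≤ z.im) : 1 ≤ norm (z - b + Complex.I) := by
  have h := Complex.sq_norm (z - b + Complex.I)
  have hns : Complex.normSq (z - b + Complex.I) = (z.re - b)^2 + (z.im + 1)^2 := by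
    rw [Complex.normSq_apply]; simp; ring
  nlinarith [norm_nonneg (z - b + Complex.I)]

lemma one_le_abs_q (hz : 0 ≤ z.im) : 1 ≤ norm (1 - Complex.I * (z - b)) := by
  have h := Complex.sq_norm (1 - Complex.I * (z - b))
  have hns : Complex.normSq (1 - Complex.I * (z - b)) = (1 + z.im)^2 + (z.re - b)^2 := by
    rw [Complex.normSq_apply]; simp; ring
  nlinarith [norm_nonneg (1 - Complex.I * (z - b))]

lemma abs_zb_le_abs_zbi (hz : 0 ≤ z.im) :
    norm (z - b) ≤ norm (z - b + Complex.I) := by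
  rw [Complex.norm_def, Complex.norm_def]
  apply Real.sqrt_le_sqrt
  have h1 : Complex.normSq (z - b) = (z.re - b)^2 + z.im^2 := by
    rw [Complex.normSq_apply]; simp; ring
  have h2 : Complex.normSq (z - b + Complex.I) = (z.re - b)^2 + (z.im + 1)^2 := by
    rw [Complex.normSq_apply]; simp; ring
  rw [h1, h2]; nlinarith

lemma abs_zb_le_one_add_abs_q :
    norm (z - b) ≤ 1 + norm (1 - Complex.I * (z - b)) := by
  have heq : (z - (b:ℂ)) = -Complex.I + Complex.I * (1 - Complex.I * (z - b)) := by
    have : Complex.I * Complex.I = -1 := Complex.I_mul_I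
    ring_nf
    rw [Complex.I_sq]
    ring
  calc norm (z - b) = norm (-Complex.I + Complex.I * (1 - Complex.I * (z - b))) := by
        rw [← heq]
  _ ≤ norm (-Complex.I) + norm (Complex.I * (1 - Complex.I * (z - b))) :=
        norm_add_le _ _
  _ = 1 + norm (1 - Complex.I * (z - b)) := by simp [norm_mul]

end absLemmas

noncomputable def barG (b t : ℝ) (F : ℂ → ℂ) (z : ℂ) : ℂ :=
  Complex.exp ((t:ℂ) * F z) * (z - b) * (z - b + Complex.I)⁻¹ *
    ((1 - Complex.I * (z - b))⁻¹)^2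

lemma abs_barG (b t : ℝ) (F : ℂ → ℂ) (z : ℂ) :
    norm (barG b t F z) = Real.exp (t * (F z).re) * norm (z - b) *
      (norm (z - b + Complex.I))⁻¹ * ((norm (1 - Complex.I * (z - b)))⁻¹)^2 := by
  simp only [barG, norm_mul, norm_pow, norm_inv, Complex.norm_exp]
  congr 3
  simp [Complex.mul_re]

section barGBounds
variable {b t M : ℝ} {F : ℂ → ℂ} {z : ℂ}

lemma barG_le_exp_re (ht : 0 ≤ t) (hz : 0 ≤ z.im) :
    norm (barG b t F z) ≤ Real.exp (t * (F z).re) := by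
  rw [abs_barG]
  have h1 : (0:ℝ) < norm (z - b + Complex.I) := lt_of_lt_of_le one_pos (one_le_abs_zbi hz)
  have h2 : (1:ℝ) ≤ norm (1 - Complex.I * (z - b)) := one_le_abs_q hz
  have h3 : norm (z - b) * (norm (z - b + Complex.I))⁻¹ ≤ 1 := by
    rw [← div_eq_mul_inv]
    exact div_le_one_of_le₀ (abs_zb_le_abs_zbi hz) h1.le
  have h4 : ((norm (1 - Complex.I * (z - b)))⁻¹)^2 ≤ 1 := by
    have : (norm (1 - Complex.I * (z - b)))⁻¹ ≤ 1 := inv_le_one_of_one_le₀ h2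
    have h0 : (0:ℝ) ≤ (norm (1 - Complex.I * (z - b)))⁻¹ := inv_nonneg.2 (by positivity)
    nlinarith
  have hE : (0:ℝ) < Real.exp (t * (F z).re) := Real.exp_pos _
  calc Real.exp (t * (F z).re) * norm (z - b) * (norm (z - b + Complex.I))⁻¹ *
        ((norm (1 - Complex.I * (z - b)))⁻¹)^2
      = Real.exp (t * (F z).re) * (norm (z - b) * (norm (z - b + Complex.I))⁻¹ *
        ((norm (1 - Complex.I * (z - b)))⁻¹)^2) := by ring
  _ ≤ Real.exp (t * (F z).re) * 1 := by
      apply mul_le_mul_of_nonneg_left _ hE.le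
      have hz0 : (0:ℝ) ≤ norm (z - b) * (norm (z - b + Complex.I))⁻¹ := by positivity
      nlinarith
  _ = Real.exp (t * (F z).re) := mul_one _

lemma barG_le_expM_mul (hu : (F z).re ≤ M) (ht : 0 ≤ t) (hz : 0 ≤ z.im) :
    norm (barG b t F z) ≤ Real.exp (t * M) * norm (z - b) := by
  rw [abs_barG]
  have h1 : (1:ℝ) ≤ norm (z - b + Complex.I) := one_le_abs_zbi hz
  have h2 : (1:ℝ) ≤ norm (1 - Complex.I * (z - b)) := one_le_abs_q hz
  have hE : Real.exp (t * (F z).re) ≤ Real.exp (t * M) :=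
    Real.exp_le_exp.2 (mul_le_mul_of_nonneg_left hu ht)
  have ha : (norm (z - b + Complex.I))⁻¹ ≤ 1 := inv_le_one_of_one_le₀ h1
  have hb' : ((norm (1 - Complex.I * (z - b)))⁻¹)^2 ≤ 1 := by
    have : (norm (1 - Complex.I * (z - b)))⁻¹ ≤ 1 := inv_le_one_of_one_le₀ h2
    have h0 : (0:ℝ) ≤ (norm (1 - Complex.I * (z - b)))⁻¹ := by positivity
    nlinarith
  have h0a : (0:ℝ) ≤ (norm (z - b + Complex.I))⁻¹ := by positivity
  have h0b : (0:ℝ) ≤ ((norm (1 - Complex.I * (z - b)))⁻¹)^2 := by positivity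
  have h0r : (0:ℝ) ≤ norm (z - b) := by positivity
  have h0E : (0:ℝ) ≤ Real.exp (t * (F z).re) := (Real.exp_pos _).le
  have hq : (norm (z - b + Complex.I))⁻¹ * ((norm (1 - Complex.I * (z - b)))⁻¹)^2 ≤ 1 :=
    mul_le_one₀ ha h0b hb'
  calc Real.exp (t * (F z).re) * norm (z - b) * (norm (z - b + Complex.I))⁻¹ *
        ((norm (1 - Complex.I * (z - b)))⁻¹)^2
      = (Real.exp (t * (F z).re) * norm (z - b)) *
        ((norm (z - b + Complex.I))⁻¹ * ((norm (1 - Complex.I * (z - b)))⁻¹)^2) := by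
        ring
  _ ≤ (Real.exp (t * (F z).re) * norm (z - b)) * 1 :=
        mul_le_mul_of_nonneg_left hq (by positivity)
  _ = Real.exp (t * (F z).re) * norm (z - b) := mul_one _
  _ ≤ Real.exp (t * M) * norm (z - b) := mul_le_mul_of_nonneg_right hE h0r

lemma barG_far (hu : (F z).re ≤ M) (ht : 0 ≤ t) (hz : 0 ≤ z.im)
    (h2r : 2 ≤ norm (z - b)) (h4r : 4 * Real.exp (t * M) ≤ norm (z - b)) :
    norm (barG b t F z) ≤ 1 := by
  rw [abs_barG]
  set r := norm (z - b) with hr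
  set r1 := norm (z - b + Complex.I) with hr1
  set r2 := norm (1 - Complex.I * (z - b)) with hr2
  have h1 : (1:ℝ) ≤ r1 := one_le_abs_zbi hz
  have h2 : (1:ℝ) ≤ r2 := one_le_abs_q hz
  have hrr1 : r ≤ r1 := abs_zb_le_abs_zbi hz
  have hrq : r ≤ 1 + r2 := abs_zb_le_one_add_abs_q
  have hE : Real.exp (t * (F z).re) ≤ Real.exp (t * M) :=
    Real.exp_le_exp.2 (mul_le_mul_of_nonneg_left hu ht)
  have hr2half : r / 2 ≤ r2 := by linarith
  have hr2pos : (0:ℝ) < r2 := by linarith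
  have hrpos : (0:ℝ) < r := by linarith
  have hinv : r2⁻¹ ≤ 2 / r := by
    have h' : r2⁻¹ ≤ (r/2)⁻¹ := by
      apply inv_anti₀ (by linarith) hr2half
    rwa [inv_div] at h'
  have hEpos : (0:ℝ) < Real.exp (t * M) := Real.exp_pos _
  have hE'pos : (0:ℝ) < Real.exp (t * (F z).re) := Real.exp_pos _
  have hA : Real.exp (t * (F z).re) * r * r1⁻¹ ≤ Real.exp (t * M) := by
    have hx : r * r1⁻¹ ≤ 1 := by
      rw [← div_eq_mul_inv]
      exact div_le_one_of_le₀ hrr1 (by linarith)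
    calc Real.exp (t * (F z).re) * r * r1⁻¹ = Real.exp (t * (F z).re) * (r * r1⁻¹) := by ring
    _ ≤ Real.exp (t * (F z).re) * 1 := mul_le_mul_of_nonneg_left hx hE'pos.le
    _ = Real.exp (t * (F z).re) := mul_one _
    _ ≤ Real.exp (t * M) := hE
  have hB : (r2⁻¹)^2 ≤ (2/r)^2 := by
    have h0 : (0:ℝ) ≤ r2⁻¹ := by positivity
    nlinarith
  calc Real.exp (t * (F z).re) * r * r1⁻¹ * (r2⁻¹)^2
      ≤ Real.exp (t * M) * (2/r)^2 := by
        apply mul_le_mul hA hB (by positivity) hEpos.le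
  _ ≤ 1 := by
      have hr2' : (0:ℝ) < r^2 := by positivity
      rw [div_pow]
      rw [show Real.exp (t*M) * (2^2 / r^2) = (4 * Real.exp (t*M)) / r^2 by ring]
      rw [div_le_one hr2']
      nlinarith

end barGBounds

lemma ne_zero_of_pos_im {w : ℂ} (h : 0 < w.im) : w ≠ 0 := by
  intro h0; rw [h0] at h; simp at h

lemma barG_differentiableOn {b t : ℝ} {F : ℂ → ℂ} (hF : DifferentiableOn ℂ F UHP) :
    DifferentiableOn ℂ (barG b t F) UHP := by
  have h1 : DifferentiableOn ℂ (fun z => Complex.exp ((t:ℂ) * F z)) UHP :=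
    (hF.const_mul _).cexp
  have h2 : DifferentiableOn ℂ (fun z : ℂ => z - (b:ℂ)) UHP :=
    (differentiable_id.sub_const _).differentiableOn
  have h3 : DifferentiableOn ℂ (fun z : ℂ => (z - (b:ℂ) + Complex.I)⁻¹) UHP := by
    apply DifferentiableOn.inv
    · exact ((differentiable_id.sub_const _).add_const _).differentiableOn
    · intro z hz
      have h := one_le_abs_zbi (b := b) (z := z) (le_of_lt hz)
      intro h0
      rw [h0] at h; simp at h; linarith
  have h4 : DifferentiableOn ℂ (fun z : ℂ => ((1 - Complex.I * (z - (b:ℂ)))⁻¹)^2) UHP := by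
    apply DifferentiableOn.pow
    apply DifferentiableOn.inv
    · apply DifferentiableOn.const_sub
      exact ((differentiable_id.sub_const _).const_mul _).differentiableOn
    · intro z hz
      have h := one_le_abs_q (b := b) (z := z) (le_of_lt hz)
      intro h0
      rw [h0] at h; simp at h; linarith
  exact ((h1.mul h2).mul h3).mul h4

lemma key_PL {F : ℂ → ℂ} {u : ℂ → ℝ} {b M : ℝ}
    (hF : DifferentiableOn ℂ F UHP)
    (hRe : ∀ z ∈ UHP, (F z).re = u z)
    (hu_cont : ContinuousOn u ({z : ℂ | 0 ≤ z.im} \ {(b:ℂ)}))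
    (hu_bdd : ∀ z ∈ UHP, |u z| ≤ M)
    (hu_bdry : ∀ x : ℝ, x ≠ b → u ((x:ℂ)) = 0)
    {z₀ : ℂ} (hz₀ : z₀ ∈ UHP) : u z₀ ≤ 0 := by
  have hz₀im : 0 < z₀.im := hz₀
  have hM : 0 ≤ M := le_trans (abs_nonneg _) (hu_bdd z₀ hz₀)
  have huM : ∀ z ∈ UHP, (F z).re ≤ M := fun z hz => by
    rw [hRe z hz]; exact (abs_le.1 (hu_bdd z hz)).2
  have hne : z₀ - (b:ℂ) ≠ 0 := by
    apply ne_zero_of_pos_im; simpa using hz₀im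
  set r0 := norm (z₀ - b) with hr0def
  have hr0 : 0 < r0 := norm_pos_iff.2 hne
  set r1 := norm (z₀ - b + Complex.I) with hr1def
  set r2 := norm (1 - Complex.I * (z₀ - b)) with hr2def
  have hr1 : 0 < r1 := lt_of_lt_of_le one_pos (one_le_abs_zbi hz₀im.le)
  have hr2 : 0 < r2 := lt_of_lt_of_le one_pos (one_le_abs_q hz₀im.le)
  set B := r1 * r2^2 / r0 with hBdef
  have hBpos : 0 < B := by positivity
  have main : ∀ η : ℝ, 0 < η → u z₀ ≤ η := by
    intro η hη
    have step : ∀ t : ℝ, 1 ≤ t → u z₀ ≤ η + Real.log B / t := by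
      intro t ht1
      have ht0 : (0:ℝ) ≤ t := by linarith
      set E := Real.exp (t * M) with hEdef
      have hEpos : (0:ℝ) < E := Real.exp_pos _
      have hE1 : (1:ℝ) ≤ E := by
        rw [hEdef, ← Real.exp_zero]; exact Real.exp_le_exp.2 (by positivity)
      set L := E⁻¹ with hLdef
      have hLpos : (0:ℝ) < L := by positivity
      have hL1 : L ≤ 1 := by
        rw [hLdef]; exact inv_le_one_of_one_le₀ hE1
      set S := 2 + 4*E + r0 + z₀.im with hSdef
      have hS2 : (2:ℝ) ≤ S := by nlinarith
      have hS4E : 4*E ≤ S := by nlinarith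
      have hSr0 : r0 < S := by nlinarith
      have hSim : z₀.im < S := by nlinarith
      -- compact sets and uniform continuity
      set K₁ : Set ℂ := Set.Icc (b + L/2) (b + S) ×ℂ Set.Icc (0:ℝ) 1 with hK₁def
      set K₂ : Set ℂ := Set.Icc (b - S) (b - L/2) ×ℂ Set.Icc (0:ℝ) 1 with hK₂def
      have hK₁c : IsCompact K₁ :=
        Metric.isCompact_of_isClosed_isBounded (isClosed_Icc.reProdIm isClosed_Icc)
          ((Metric.isBounded_Icc _ _).reProdIm (Metric.isBounded_Icc _ _))
      have hK₂c : IsCompact K₂ :=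
        Metric.isCompact_of_isClosed_isBounded (isClosed_Icc.reProdIm isClosed_Icc)
          ((Metric.isBounded_Icc _ _).reProdIm (Metric.isBounded_Icc _ _))
      have hK₁sub : K₁ ⊆ {z : ℂ | 0 ≤ z.im} \ {(b:ℂ)} := by
        intro z hz
        rw [hK₁def, Complex.mem_reProdIm] at hz
        refine ⟨hz.2.1, ?_⟩
        intro hzb
        rw [Set.mem_singleton_iff] at hzb
        have hre : z.re = b := by rw [hzb]; simp
        have h1 := (Set.mem_Icc.1 hz.1).1
        rw [hre] at h1
        linarith
      have hK₂sub : K₂ ⊆ {z : ℂ | 0 ≤ z.im} \ {(b:ℂ)} := by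
        intro z hz
        rw [hK₂def, Complex.mem_reProdIm] at hz
        refine ⟨hz.2.1, ?_⟩
        intro hzb
        rw [Set.mem_singleton_iff] at hzb
        have hre : z.re = b := by rw [hzb]; simp
        have h1 := (Set.mem_Icc.1 hz.1).2
        rw [hre] at h1
        linarith
      obtain ⟨δ₁, hδ₁pos, hδ₁⟩ := Metric.uniformContinuousOn_iff.1
        (hK₁c.uniformContinuousOn_of_continuous (hu_cont.mono hK₁sub)) η hη
      obtain ⟨δ₂, hδ₂pos, hδ₂⟩ := Metric.uniformContinuousOn_iff.1
        (hK₂c.uniformContinuousOn_of_continuous (hu_cont.mono hK₂sub)) η hη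
      set t₀ := min (min (δ₁/2) (δ₂/2)) (min (L/4) (min (z₀.im/2) 1)) with ht₀def
      have ht₀pos : 0 < t₀ := by
        apply lt_min (lt_min (by linarith) (by linarith))
        exact lt_min (by linarith) (lt_min (by linarith) one_pos)
      have ht₀δ₁ : t₀ < δ₁ := lt_of_le_of_lt (le_trans (min_le_left _ _) (min_le_left _ _)) (by linarith)
      have ht₀δ₂ : t₀ < δ₂ := lt_of_le_of_lt (le_trans (min_le_left _ _) (min_le_right _ _)) (by linarith)
      have ht₀L : t₀ ≤ L/4 := le_trans (min_le_right _ _) (min_le_left _ _)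
      have ht₀im : t₀ < z₀.im :=
        lt_of_le_of_lt (le_trans (min_le_right _ _) (le_trans (min_le_right _ _) (min_le_left _ _))) (by linarith)
      have ht₀1 : t₀ ≤ 1 := le_trans (min_le_right _ _) (le_trans (min_le_right _ _) (min_le_right _ _))
      have ht₀S : t₀ < S := by linarith
      -- the rectangle
      set Ω : Set ℂ := Set.Ioo (b - S) (b + S) ×ℂ Set.Ioo t₀ S with hΩdef
      have hΩbdd : Bornology.IsBounded Ω :=
        (Metric.isBounded_Ioo _ _).reProdIm (Metric.isBounded_Ioo _ _)
      have hclos : closure Ω ⊆ UHP := by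
        rw [hΩdef, Complex.closure_reProdIm, closure_Ioo (by intro hc; linarith : b - S ≠ b + S),
          closure_Ioo (ne_of_lt ht₀S)]
        intro z hz
        rw [Complex.mem_reProdIm] at hz
        exact lt_of_lt_of_le ht₀pos hz.2.1
      have hz₀Ω : z₀ ∈ Ω := by
        rw [hΩdef, Complex.mem_reProdIm]
        have hre : |z₀.re - b| ≤ r0 := by
          rw [hr0def]
          simpa using Complex.abs_re_le_norm (z₀ - b)
        have := abs_le.1 hre
        constructor
        · constructor <;> [linarith [this.1]; linarith [this.2] ]
        · exact ⟨ht₀im, hSim⟩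
      -- differentiability on the closure
      have hGdiff : DiffContOnCl ℂ (barG b t F) Ω :=
        ⟨(barG_differentiableOn hF).mono (fun z hz => hclos (subset_closure hz)),
         ((barG_differentiableOn hF).continuousOn).mono hclos⟩
      -- frontier bound
      have hfront : ∀ z ∈ frontier Ω, ‖barG b t F z‖ ≤ Real.exp (t * η) := by
        intro z hzf
        have hexpη : (1:ℝ) ≤ Real.exp (t * η) := by
          rw [← Real.exp_zero]; exact Real.exp_le_exp.2 (by positivity)
        rw [hΩdef, Complex.frontier_reProdIm, closure_Ioo (by intro hc; linarith : b - S ≠ b + S),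
          frontier_Ioo ht₀S, closure_Ioo (ne_of_lt ht₀S), frontier_Ioo (by linarith : b - S < b + S)] at hzf
        have hzim : 0 < z.im → z ∈ UHP := fun h => h
        rcases hzf with hz | hz
        · -- z.re ∈ Icc, z.im ∈ {t₀, S}
          rw [Complex.mem_reProdIm] at hz
          obtain ⟨hzre, hzim2⟩ := hz
          rcases hzim2 with him | him
          · -- bottom edge, z.im = t₀
            have hzU : z ∈ UHP := by
              have : z.im = t₀ := him
              simp only [UHP, Set.mem_setOf_eq, this]; exact ht₀pos
            have hFM : (F z).re ≤ M := huM z hzU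
            rcases le_or_gt (b + L/2) z.re with hcase | hcase
            · -- right part: use K₁
              have hzK₁ : z ∈ K₁ := by
                rw [hK₁def, Complex.mem_reProdIm]
                exact ⟨Set.mem_Icc.2 ⟨hcase, (Set.mem_Icc.1 hzre).2⟩,
                  Set.mem_Icc.2 ⟨by rw [him]; exact ht₀pos.le, by rw [him]; exact ht₀1⟩⟩
              have hxK₁ : ((z.re : ℝ) : ℂ) ∈ K₁ := by
                rw [hK₁def, Complex.mem_reProdIm]
                constructor
                · simp only [Complex.ofReal_re]
                  exact Set.mem_Icc.2 ⟨hcase, (Set.mem_Icc.1 hzre).2⟩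
                · simp
              have hdist : dist z ((z.re : ℝ) : ℂ) < δ₁ := by
                rw [Complex.dist_eq]
                have heq : z - ((z.re : ℝ) : ℂ) = ((z.im : ℝ) : ℂ) * Complex.I := by
                  apply Complex.ext <;> simp
                rw [heq]
                simp only [norm_mul, Complex.norm_real, Complex.norm_I, mul_one, Real.norm_eq_abs]
                rw [_root_.abs_of_nonneg (by rw [him]; exact ht₀pos.le)]
                rw [him]; exact ht₀δ₁
              have hub := hδ₁ z hzK₁ _ hxK₁ hdist
              rw [Real.dist_eq, hu_bdry z.re (by intro hc; rw [hc] at hcase; linarith)] at hub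
              have huz : u z ≤ η := by
                rw [sub_zero] at hub
                exact le_of_lt (lt_of_le_of_lt (le_abs_self _) hub)
              calc norm (barG b t F z) ≤ Real.exp (t * (F z).re) :=
                    barG_le_exp_re ht0 hzU.le
              _ ≤ Real.exp (t * η) := by
                  apply Real.exp_le_exp.2
                  apply mul_le_mul_of_nonneg_left _ ht0
                  rw [hRe z hzU]; exact huz
            · rcases le_or_gt z.re (b - L/2) with hcase2 | hcase2
              · -- left part: use K₂
                have hzK₂ : z ∈ K₂ := by
                  rw [hK₂def, Complex.mem_reProdIm]
                  exact ⟨Set.mem_Icc.2 ⟨(Set.mem_Icc.1 hzre).1, hcase2⟩,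
                    Set.mem_Icc.2 ⟨by rw [him]; exact ht₀pos.le, by rw [him]; exact ht₀1⟩⟩
                have hxK₂ : ((z.re : ℝ) : ℂ) ∈ K₂ := by
                  rw [hK₂def, Complex.mem_reProdIm]
                  constructor
                  · simp only [Complex.ofReal_re]
                    exact Set.mem_Icc.2 ⟨(Set.mem_Icc.1 hzre).1, hcase2⟩
                  · simp
                have hdist : dist z ((z.re : ℝ) : ℂ) < δ₂ := by
                  rw [Complex.dist_eq]
                  have heq : z - ((z.re : ℝ) : ℂ) = ((z.im : ℝ) : ℂ) * Complex.I := by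
                    apply Complex.ext <;> simp
                  rw [heq]
                  simp only [norm_mul, Complex.norm_real, Complex.norm_I, mul_one, Real.norm_eq_abs]
                  rw [_root_.abs_of_nonneg (by rw [him]; exact ht₀pos.le)]
                  rw [him]; exact ht₀δ₂
                have hub := hδ₂ z hzK₂ _ hxK₂ hdist
                rw [Real.dist_eq, hu_bdry z.re (by intro hc; rw [hc] at hcase2; linarith)] at hub
                have huz : u z ≤ η := by
                  rw [sub_zero] at hub
                  exact le_of_lt (lt_of_le_of_lt (le_abs_self _) hub)
                calc norm (barG b t F z) ≤ Real.exp (t * (F z).re) :=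
                      barG_le_exp_re ht0 hzU.le
                _ ≤ Real.exp (t * η) := by
                    apply Real.exp_le_exp.2
                    apply mul_le_mul_of_nonneg_left _ ht0
                    rw [hRe z hzU]; exact huz
              · -- middle part: |z.re - b| < L/2
                have habs : norm (z - b) ≤ L := by
                  calc norm (z - b) ≤ |(z - (b:ℂ)).re| + |(z - (b:ℂ)).im| :=
                        Complex.norm_le_abs_re_add_abs_im _
                  _ = |z.re - b| + |z.im| := by simp
                  _ ≤ L/2 + L/4 := by
                      apply add_le_add
                      · rw [abs_le]; constructor <;> [linarith; linarith]
                      · rw [him, _root_.abs_of_nonneg ht₀pos.le]; exact ht₀L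
                  _ ≤ L := by linarith
                calc norm (barG b t F z) ≤ E * norm (z - b) :=
                      barG_le_expM_mul hFM ht0 hzU.le
                _ ≤ E * L := mul_le_mul_of_nonneg_left habs hEpos.le
                _ = 1 := by rw [hLdef]; exact mul_inv_cancel₀ hEpos.ne'
                _ ≤ Real.exp (t * η) := hexpη
          · -- top edge, z.im = S
            have hzU : z ∈ UHP := by
              have : z.im = S := him
              simp only [UHP, Set.mem_setOf_eq, this]; linarith
            have hFM : (F z).re ≤ M := huM z hzU
            have hfar : S ≤ norm (z - b) := by
              calc S = |(z - (b:ℂ)).im| := by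
                    simp only [Complex.sub_im, Complex.ofReal_im, sub_zero]
                    rw [him, _root_.abs_of_nonneg (by linarith)]
              _ ≤ norm (z - b) := Complex.abs_im_le_norm _
            calc norm (barG b t F z) ≤ 1 :=
                  barG_far hFM ht0 hzU.le (by linarith) (by linarith)
            _ ≤ Real.exp (t * η) := hexpη
        · -- z.re ∈ {b-S, b+S}, z.im ∈ Icc t₀ S
          rw [Complex.mem_reProdIm] at hz
          obtain ⟨hzre, hzim2⟩ := hz
          have hzU : z ∈ UHP := by
            simp only [UHP, Set.mem_setOf_eq]
            exact lt_of_lt_of_le ht₀pos hzim2.1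
          have hFM : (F z).re ≤ M := huM z hzU
          have hfar : S ≤ norm (z - b) := by
            have : |(z - (b:ℂ)).re| = S := by
              simp only [Complex.sub_re, Complex.ofReal_re]
              simp only [Set.mem_insert_iff, Set.mem_singleton_iff] at hzre
              rcases hzre with h | h
              · rw [h, show b - S - b = -S by ring, abs_neg, _root_.abs_of_nonneg (by linarith)]
              · rw [h, show b + S - b = S by ring, _root_.abs_of_nonneg (by linarith)]
            calc S = |(z - (b:ℂ)).re| := this.symm
            _ ≤ norm (z - b) := Complex.abs_re_le_norm _
          calc norm (barG b t F z) ≤ 1 :=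
                barG_far hFM ht0 hzU.le (by linarith) (by linarith)
          _ ≤ Real.exp (t * η) := hexpη
      -- maximum modulus
      have hmax := Complex.norm_le_of_forall_mem_frontier_norm_le hΩbdd hGdiff hfront
        (subset_closure hz₀Ω)
      rw [abs_barG, hRe z₀ hz₀] at hmax
      -- extract the inequality
      have hexp_le : Real.exp (t * u z₀) ≤ Real.exp (t * η) * B := by
        have heq : Real.exp (t * u z₀) =
            (Real.exp (t * u z₀) * r0 * r1⁻¹ * (r2⁻¹)^2) * (r1 * r2^2 / r0) := by
          field_simp
        rw [heq, hBdef]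
        exact mul_le_mul_of_nonneg_right hmax (by positivity)
      have hlog := Real.log_le_log (Real.exp_pos _) hexp_le
      rw [Real.log_exp, Real.log_mul (Real.exp_pos _).ne' hBpos.ne', Real.log_exp] at hlog
      have htpos : (0:ℝ) < t := by linarith
      calc u z₀ = (t * u z₀) / t := by field_simp
      _ ≤ (t * η + Real.log B) / t := by gcongr
      _ = η + Real.log B / t := by field_simp
    -- let t → ∞
    have htends : Filter.Tendsto (fun t : ℝ => η + Real.log B / t) Filter.atTop (nhds η) := by
      have h1 : Filter.Tendsto (fun t : ℝ => Real.log B / t) Filter.atTop (nhds 0) :=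
        Filter.Tendsto.div_atTop tendsto_const_nhds Filter.tendsto_id
      simpa using Filter.Tendsto.add (tendsto_const_nhds : Filter.Tendsto (fun _ : ℝ => η) Filter.atTop (nhds η)) h1
    exact ge_of_tendsto htends (Filter.eventually_atTop.2 ⟨1, step⟩)
  by_contra hpos
  push_neg at hpos
  have := main (u z₀ / 2) (by linarith)
  linarith


theorem harmonic_measure_halfline (b : ℝ) (h : ℂ → ℝ)
    (hharm : IsHarmonicOn h {z : ℂ | 0 < z.im})
    (hbdd : ∃ M : ℝ, ∀ z ∈ {z : ℂ | 0 < z.im}, |h z| ≤ M)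
    (hcont : ContinuousOn h ({z : ℂ | 0 ≤ z.im} \ {(b : ℂ)}))
    (hgt : ∀ x : ℝ, b < x → h x = 1)
    (hlt : ∀ x : ℝ, x < b → h x = 0) :
    ∀ z : ℂ, 0 < z.im → h z = 1 - (1 / π) * (z - b).arg := by
  intro z₀ hz₀im
  obtain ⟨M, hM⟩ := hbdd
  have hz₀ : z₀ ∈ UHP := hz₀im
  have hπ : (0:ℝ) < π := Real.pi_pos
  have hIU : Complex.I ∈ UHP := by simp [UHP]
  -- the holomorphic derivative and its primitive
  set p : ℂ → ℂ := pderiv h with hpdef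
  have hpdiff : DifferentiableOn ℂ p UHP := fun z hz =>
    (pderiv_differentiableAt isOpen_UHP hz hharm.1 hharm.2).differentiableWithinAt
  set f : ℂ → ℂ := primFn p with hfdef
  have hprim : ∀ z ∈ UHP, HasDerivAt f (p z) z := fun z hz => primFn_hasDerivAt hpdiff hz
  have hhd : ∀ z ∈ UHP, DifferentiableAt ℝ h z := fun z hz =>
    ((hharm.1.differentiableOn (by norm_num)) z hz).differentiableAt (isOpen_UHP.mem_nhds hz)
  -- Re f - h has zero derivative on UHP
  have hg0 : ∀ z ∈ UHP, HasFDerivAt (fun w => (f w).re - h w) (0 : ℂ →L[ℝ] ℝ) z := by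
    intro z hz
    have hfd := ((hprim z hz).hasFDerivAt).restrictScalars ℝ
    have hre : HasFDerivAt (fun w => (f w).re)
        (Complex.reCLM.comp ((ContinuousLinearMap.smulRight (1 : ℂ →L[ℂ] ℂ)
          (p z)).restrictScalars ℝ)) z :=
      (Complex.reCLM.hasFDerivAt).comp z hfd
    have hhz := (hhd z hz).hasFDerivAt
    have h2 := hre.sub hhz
    have hzero : (Complex.reCLM.comp ((ContinuousLinearMap.smulRight (1 : ℂ →L[ℂ] ℂ)
          (p z)).restrictScalars ℝ)) - fderiv ℝ h z = (0 : ℂ →L[ℝ] ℝ) := by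
      apply clm_ext_complex
      · simp only [ContinuousLinearMap.sub_apply, ContinuousLinearMap.comp_apply,
          ContinuousLinearMap.coe_restrictScalars', ContinuousLinearMap.smulRight_apply,
          ContinuousLinearMap.one_apply, ContinuousLinearMap.zero_apply, one_smul,
          Complex.reCLM_apply, hpdef, pderiv]
        simp [Complex.sub_re, Complex.mul_re]
      · simp only [ContinuousLinearMap.sub_apply, ContinuousLinearMap.comp_apply,
          ContinuousLinearMap.coe_restrictScalars', ContinuousLinearMap.smulRight_apply,
          ContinuousLinearMap.one_apply, ContinuousLinearMap.zero_apply,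
          Complex.reCLM_apply, hpdef, pderiv]
        simp [smul_eq_mul, Complex.mul_re, Complex.sub_re, Complex.sub_im, Complex.mul_im]
    rw [hzero] at h2
    exact h2
  have hconv : Convex ℝ UHP := convex_halfSpace_im_gt 0
  have hconst : ∀ z ∈ UHP, (f z).re - h z = (f Complex.I).re - h Complex.I := by
    intro z hz
    exact hconv.is_const_of_fderivWithin_eq_zero (𝕜 := ℝ)
      (fun w hw => ((hg0 w hw).differentiableAt).differentiableWithinAt)
      (fun w hw => by rw [fderivWithin_of_isOpen isOpen_UHP hw]; exact (hg0 w hw).fderiv)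
      hz hIU
  set C : ℝ := (f Complex.I).re - h Complex.I with hCdef
  set Φ : ℂ → ℂ := fun z => 1 + (Complex.I / (π:ℝ)) * Complex.log (z - (b:ℂ)) with hΦdef
  set u : ℂ → ℝ := fun z => h z - (1 - (1/π) * (z - (b:ℂ)).arg) with hudef
  set F : ℂ → ℂ := fun z => f z - (C:ℂ) - Φ z with hFdef
  have hslit : ∀ z ∈ UHP, (z - (b:ℂ)) ∈ Complex.slitPlane := by
    intro z hz
    apply Complex.mem_slitPlane_iff.2
    right
    have : (z - (b:ℂ)).im = z.im := by simp
    rw [this]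
    exact ne_of_gt (hz : 0 < z.im)
  have hΦdiff : DifferentiableOn ℂ Φ UHP := by
    intro z hz
    apply DifferentiableAt.differentiableWithinAt
    apply DifferentiableAt.const_add
    apply DifferentiableAt.const_mul
    exact (Complex.differentiableAt_log (hslit z hz)).comp z (differentiableAt_id.sub_const _)
  have hFdiff : DifferentiableOn ℂ F UHP := by
    intro z hz
    exact (((hprim z hz).differentiableAt.differentiableWithinAt).sub_const _).sub (hΦdiff z hz)
  have hΦre : ∀ z : ℂ, (Φ z).re = 1 - (1/π) * (z - (b:ℂ)).arg := by
    intro z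
    have hIm : (Complex.I * Complex.log (z - (b:ℂ))).re = -(z - (b:ℂ)).arg := by
      rw [Complex.mul_re]
      simp [Complex.log_im]
    simp only [hΦdef, Complex.add_re, Complex.one_re]
    rw [div_mul_eq_mul_div, Complex.div_ofReal_re, hIm]
    ring
  have hFre : ∀ z ∈ UHP, (F z).re = u z := by
    intro z hz
    have hcz := hconst z hz
    simp only [hFdef, Complex.sub_re, Complex.ofReal_re, hΦre, hudef]
    have : (f z).re = h z + C := by rw [hCdef]; linarith
    rw [this]
    ring
  have hu_bdd : ∀ z ∈ UHP, |u z| ≤ M + 1 := by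
    intro z hz
    have h1 := hM z hz
    have ha1 : 0 ≤ (z - (b:ℂ)).arg := by
      apply Complex.arg_nonneg_iff.2
      have : (z - (b:ℂ)).im = z.im := by simp
      rw [this]
      exact (le_of_lt (hz : 0 < z.im))
    have ha2 : (z - (b:ℂ)).arg ≤ π := Complex.arg_le_pi _
    have hv1 : (1/π) * (z - (b:ℂ)).arg ≤ 1 := by
      calc (1/π) * (z - (b:ℂ)).arg ≤ (1/π) * π :=
        mul_le_mul_of_nonneg_left ha2 (by positivity)
      _ = 1 := by field_simp
    have hv2 : 0 ≤ (1/π) * (z - (b:ℂ)).arg := by positivity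
    rw [abs_le] at h1 ⊢
    simp only [hudef]
    constructor <;> [linarith [h1.1]; linarith [h1.2] ]
  have hu_cont : ContinuousOn u ({z : ℂ | 0 ≤ z.im} \ {(b:ℂ)}) := by
    have harg : ContinuousOn (fun z : ℂ => (z - (b:ℂ)).arg)
        ({z : ℂ | 0 ≤ z.im} \ {(b:ℂ)}) := by
      intro z hz
      obtain ⟨him, hzb⟩ := hz
      by_cases hcase : z - (b:ℂ) ∈ Complex.slitPlane
      · have hc1 : ContinuousAt (fun w : ℂ => w - (b:ℂ)) z :=
          (continuous_id.sub continuous_const).continuousAt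
        exact (ContinuousAt.comp (g := Complex.arg) (f := fun w : ℂ => w - (b:ℂ))
          (Complex.continuousAt_arg hcase) hc1).continuousWithinAt
      · rw [Complex.mem_slitPlane_iff] at hcase
        push_neg at hcase
        have him0 : (z - (b:ℂ)).im = 0 := hcase.2
        have hre0 : (z - (b:ℂ)).re ≤ 0 := hcase.1
        have hrelt : (z - (b:ℂ)).re < 0 := by
          rcases lt_or_eq_of_le hre0 with hc | hc
          · exact hc
          · exfalso
            apply hzb
            rw [Set.mem_singleton_iff]
            have : z - (b:ℂ) = 0 := Complex.ext (by simpa using hc) him0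
            have := sub_eq_zero.1 this
            exact this
        have hbase := Complex.continuousWithinAt_arg_of_re_neg_of_im_zero hrelt him0
        have hmaps : Set.MapsTo (fun z : ℂ => z - (b:ℂ))
            ({z : ℂ | 0 ≤ z.im} \ {(b:ℂ)}) {w : ℂ | 0 ≤ w.im} := by
          intro w hw
          simpa using hw.1
        have hc1 : ContinuousWithinAt (fun w : ℂ => w - (b:ℂ))
            ({z : ℂ | 0 ≤ z.im} \ {(b:ℂ)}) z :=
          (continuous_id.sub continuous_const).continuousWithinAt
        exact ContinuousWithinAt.comp (g := Complex.arg) (f := fun w : ℂ => w - (b:ℂ))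
          hbase hc1 hmaps
    exact hcont.sub (continuousOn_const.sub (continuousOn_const.mul harg))
  have hu_bdry : ∀ x : ℝ, x ≠ b → u ((x:ℝ):ℂ) = 0 := by
    intro x hx
    have hxb : ((x:ℝ):ℂ) - (b:ℂ) = ((x - b : ℝ):ℂ) := by push_cast; ring
    rcases lt_or_gt_of_ne hx with hcase | hcase
    · simp only [hudef]
      rw [hlt x hcase, hxb, Complex.arg_ofReal_of_neg (by linarith)]
      field_simp; ring
    · simp only [hudef]
      rw [hgt x hcase, hxb, Complex.arg_ofReal_of_nonneg (by linarith)]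
      simp
  have h1 := key_PL hFdiff hFre hu_cont hu_bdd hu_bdry hz₀
  have h2 := key_PL (F := fun z => -F z) (u := fun z => -u z) (b := b) (M := M + 1)
    hFdiff.neg (fun z hz => by simp [hFre z hz]) hu_cont.neg
    (fun z hz => by simpa using hu_bdd z hz)
    (fun x hx => by simp [hu_bdry x hx]) hz₀
  have h2' : -(u z₀) ≤ 0 := h2
  have hu0 : u z₀ = 0 := le_antisymm h1 (by linarith)
  simp only [hudef] at hu0
  linarith
end
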